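/- (Consistency of the witness set in the proof of Lemma 9.) In the canonical model M(T₀,F₀), for any world w ∈ W, any datasets U, T, X ⊆ V, and any formula φ ∈ Φ such that [U]B^T_X φ ∉ F(w), the set of formulas G = {¬[U]φ} ∪ {ψ : B^∅_{U∪X} ψ ∈ F(w)} ∪ {B^T_Y χ → χ : Y ⊆ V, χ ∈ Φ} is consistent. -/
import Mathlib


/-- Formulas of the Dynamic Logic of Trust-Based Beliefs over data variables `V`
and atomic propositions `A`:  p | ¬φ | φ→φ | B^T_X φ | [X]φ. -/
inductive Formula (V A : Type) : Type
  | atom : A → Formula V A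
  | neg  : Formula V A → Formula V A
  | imp  : Formula V A → Formula V A → Formula V A
  | bel  : Set V → Set V → Formula V A → Formula V A   -- `bel T X φ` is B^T_X φ
  | ann  : Set V → Formula V A → Formula V A           -- `ann X φ` is [X]φ

/-- A trustworthiness model `(W, {∼ₓ}, {𝒯_w}, π)`. -/
structure TModel (V A : Type) where
  W : Type
  sim : V → W → W → Prop
  sim_equiv : ∀ x : V, Equivalence (sim x)
  trust : W → Set V
  pi : A → Set (W × Set V)

namespace TModel

variable {V A : Type} (M : TModel V A)

/-- `w ∼_X u` iff `w ∼ₓ u` for each `x ∈ X`. -/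
def simSet (X : Set V) (w u : M.W) : Prop := ∀ x ∈ X, M.sim x w u

/-- The satisfaction relation `w,U ⊩ φ`. -/
def Sat : Formula V A → M.W → Set V → Prop
  | .atom p, w, U => (w, U) ∈ M.pi p
  | .neg φ, w, U => ¬ Sat φ w U
  | .imp φ ψ, w, U => Sat φ w U → Sat ψ w U
  | .bel T X φ, w, U => ∀ w' : M.W, M.simSet (X ∪ U) w w' → T ⊆ M.trust w' → Sat φ w' U
  | .ann X φ, w, U => Sat φ w (U ∪ X)

end TModel
/-- `φ ∧ ψ`, defined through `¬` and `→` in the usual way. -/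
def Formula.conj {V A : Type} (φ ψ : Formula V A) : Formula V A :=
  .neg (.imp φ (.neg ψ))

/-- `φ ↔ ψ`, defined through `¬` and `→` in the usual way. -/
def Formula.iff {V A : Type} (φ ψ : Formula V A) : Formula V A :=
  Formula.conj (.imp φ ψ) (.imp ψ φ)

/-- Propositional tautologies in the language `Φ`: formulas true under every
assignment of truth values to formulas respecting `¬` and `→`. -/
def Tautology {V A : Type} (φ : Formula V A) : Prop :=
  ∀ v : Formula V A → Prop,
    (∀ ψ, v (.neg ψ) ↔ ¬ v ψ) →
    (∀ ψ χ, v (.imp ψ χ) ↔ (v ψ → v χ)) →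
    v φ

/-- Theorems of the Dynamic Logic of Trust-Based Beliefs: `⊢ φ`. -/
inductive Prv {V A : Type} : Formula V A → Prop
  | taut {φ : Formula V A} : Tautology φ → Prv φ
  | truth (X : Set V) (φ : Formula V A) : Prv (.imp (.bel ∅ X φ) φ)
  | distB (T X : Set V) (φ ψ : Formula V A) :
      Prv (.imp (.bel T X (.imp φ ψ)) (.imp (.bel T X φ) (.bel T X ψ)))
  | distA (X : Set V) (φ ψ : Formula V A) :
      Prv (.imp (.ann X (.imp φ ψ)) (.imp (.ann X φ) (.ann X ψ)))
  | negIntro (T X : Set V) (φ : Formula V A) :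
      Prv (.imp (.neg (.bel T X φ)) (.bel ∅ X (.neg (.bel T X φ))))
  | mono {T T' X X' : Set V} (φ : Formula V A) :
      T ⊆ T' → X ⊆ X' → Prv (.imp (.bel T X φ) (.bel T' X' φ))
  | trust (T X Y : Set V) (φ : Formula V A) : Prv (.bel T X (.imp (.bel T Y φ) φ))
  | comb (X Y : Set V) (φ : Formula V A) :
      Prv (Formula.iff (.ann X (.ann Y φ)) (.ann (X ∪ Y) φ))
  | comm (T X Y : Set V) (φ : Formula V A) :
      Prv (Formula.iff (.ann Y (.bel T X φ)) (.bel T (Y ∪ X) (.ann Y φ)))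
  | dual (X : Set V) (φ : Formula V A) :
      Prv (Formula.iff (.neg (.ann X φ)) (.ann X (.neg φ)))
  | empty (φ : Formula V A) : Prv (Formula.iff (.ann ∅ φ) φ)
  | mp {φ ψ : Formula V A} : Prv (.imp φ ψ) → Prv φ → Prv ψ
  | necB (T X : Set V) {φ : Formula V A} : Prv φ → Prv (.bel T X φ)
  | necA (X : Set V) {φ : Formula V A} : Prv φ → Prv (.ann X φ)

/-- `F ⊢ φ`: φ is derivable from theorems of the system and the set of
additional assumptions `F` using the Modus Ponens inference rule only. -/
inductive Deriv {V A : Type} (F : Set (Formula V A)) : Formula V A → Prop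
  | thm {φ : Formula V A} : Prv φ → Deriv F φ
  | hyp {φ : Formula V A} : φ ∈ F → Deriv F φ
  | mp {φ ψ : Formula V A} : Deriv F (.imp φ ψ) → Deriv F φ → Deriv F ψ

/-- A set of formulas is consistent if no formula and its negation are both derivable. -/
def Consistent {V A : Type} (F : Set (Formula V A)) : Prop :=
  ¬ ∃ φ : Formula V A, Deriv F φ ∧ Deriv F (.neg φ)

/-- A maximal consistent set: a consistent set not properly contained in any consistent set. -/
def MaxConsistent {V A : Type} (F : Set (Formula V A)) : Prop :=
  Consistent F ∧ ∀ G : Set (Formula V A), F ⊆ G → Consistent G → G = F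
/-- A triple `(Xᵢ, Tᵢ, Fᵢ)` labelling one step of a canonical-model world. -/
abbrev Triple (V A : Type) := Set V × Set V × Set (Formula V A)

/-- Condition on a node labelled `T, F` of the canonical tree: `F` is a maximal
consistent set and `B^T_Y φ → φ ∈ F` for every dataset `Y` and formula `φ`. -/
def NodeOk {V A : Type} (T : Set V) (F : Set (Formula V A)) : Prop :=
  MaxConsistent F ∧ ∀ (Y : Set V) (φ : Formula V A), Formula.imp (.bel T Y φ) φ ∈ F

/-- `T(w)`: the last dataset `Tₙ` of the world `w` (worlds are written as lists of
triples with the most recent triple first; the empty list is the root `T₀, F₀`). -/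
def worldT {V A : Type} (T₀ : Set V) : List (Triple V A) → Set V
  | [] => T₀
  | (_, T, _) :: _ => T

/-- `F(w)`: the last set of formulas `Fₙ` of the world `w`. -/
def worldF {V A : Type} (F₀ : Set (Formula V A)) : List (Triple V A) → Set (Formula V A)
  | [] => F₀
  | (_, _, F) :: _ => F

/-- Worlds of the canonical model `M(T₀,F₀)`: sequences
`T₀,F₀,X₁,T₁,F₁,…,Xₙ,Tₙ,Fₙ` such that each `Fᵢ` is a maximal consistent set with
(a) `ψ ∈ Fᵢ` whenever `B^∅_{Xᵢ} ψ ∈ F_{i-1}` (for `i > 0`), and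
(b) `B^{Tᵢ}_Y φ → φ ∈ Fᵢ` for every dataset `Y` and formula `φ`. -/
def IsWorld {V A : Type} (T₀ : Set V) (F₀ : Set (Formula V A)) :
    List (Triple V A) → Prop
  | [] => NodeOk T₀ F₀
  | (X, T, F) :: rest =>
      IsWorld T₀ F₀ rest ∧ NodeOk T F ∧
        ∀ ψ : Formula V A, Formula.bel ∅ X ψ ∈ worldF F₀ rest → ψ ∈ F

/-- `u ∼ₓ v` in the canonical model: every edge along the unique simple path in the
tree between `u` and `v` is labelled with the variable `x`; equivalently, `u` and `v`
have a common ancestor `c` such that every edge between `c` and `u` and every edge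
between `c` and `v` is labelled with `x`. -/
def csim {V A : Type} (x : V) (u v : List (Triple V A)) : Prop :=
  ∃ c d₁ d₂ : List (Triple V A),
    u = d₁ ++ c ∧ v = d₂ ++ c ∧ (∀ t ∈ d₁, x ∈ t.1) ∧ (∀ t ∈ d₂, x ∈ t.1)


section Aux

variable {V A : Type}

lemma deriv_mono {F G : Set (Formula V A)} (h : F ⊆ G) {φ : Formula V A}
    (hd : Deriv F φ) : Deriv G φ := by
  induction hd with
  | thm h' => exact .thm h'
  | hyp hm => exact .hyp (h hm)
  | mp _ _ ih1 ih2 => exact .mp ih1 ih2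

lemma taut_prv {φ : Formula V A} (h : Tautology φ) : Deriv (∅ : Set (Formula V A)) φ :=
  .thm (Prv.taut h)

lemma deduction {F : Set (Formula V A)} {φ ψ : Formula V A}
    (h : Deriv (insert φ F) ψ) : Deriv F (.imp φ ψ) := by
  induction h with
  | thm h' =>
      exact .mp (.thm (Prv.taut (by intro v hn hi; simp only [hi]; tauto))) (.thm h')
  | hyp hm =>
      rcases Set.mem_insert_iff.mp hm with h' | h'
      · subst h'
        exact .thm (Prv.taut (by intro v hn hi; simp only [hi]; tauto))
      · exact .mp (.thm (Prv.taut (by intro v hn hi; simp only [hi]; tauto))) (.hyp h')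
  | mp _ _ ih1 ih2 =>
      exact .mp (.mp (.thm (Prv.taut (by intro v hn hi; simp only [hi]; tauto))) ih1) ih2

lemma mcs_mem {F : Set (Formula V A)} (hF : MaxConsistent F) {φ : Formula V A}
    (hd : Deriv F φ) : φ ∈ F := by
  have hcons : Consistent (insert φ F) := by
    rintro ⟨χ, h1, h2⟩
    exact hF.1 ⟨χ, .mp (deduction h1) hd, .mp (deduction h2) hd⟩
  have heq := hF.2 (insert φ F) (Set.subset_insert _ _) hcons
  rw [← heq]; exact Set.mem_insert _ _

lemma worldF_mcs {T₀ : Set V} {F₀ : Set (Formula V A)} {w : List (Triple V A)}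
    (hw : IsWorld T₀ F₀ w) : MaxConsistent (worldF F₀ w) := by
  cases w with
  | nil => exact hw.1
  | cons t rest =>
      obtain ⟨X, T, F⟩ := t
      exact hw.2.1.1

/-- Boxing lemma: anything derivable from the base witness set is, when boxed
with `B^T_{U∪X}`, derivable from `Fw`. -/
lemma box_deriv {Fw : Set (Formula V A)} {T U X : Set V} {χ : Formula V A}
    (hd : Deriv ({ψ | Formula.bel ∅ (U ∪ X) ψ ∈ Fw} ∪
      {χ | ∃ (Y : Set V) (ψ : Formula V A), χ = Formula.imp (.bel T Y ψ) ψ}) χ) :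
    Deriv Fw (.bel T (U ∪ X) χ) := by
  induction hd with
  | thm h' => exact .thm (Prv.necB T (U ∪ X) h')
  | hyp hm =>
      rcases hm with hm | hm
      · exact .mp (.thm (Prv.mono _ (Set.empty_subset T) (subset_refl (U ∪ X)))) (.hyp hm)
      · obtain ⟨Y, ψ, rfl⟩ := hm
        exact .thm (Prv.trust T (U ∪ X) Y ψ)
  | mp _ _ ih1 ih2 =>
      exact .mp (.mp (.thm (Prv.distB _ _ _ _)) ih1) ih2

end Aux

/-- Consistency of the witness set in the proof of Lemma 9: if `[U]B^T_X φ ∉ F(w)`,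
then `G = {¬[U]φ} ∪ {ψ | B^∅_{U∪X} ψ ∈ F(w)} ∪ {B^T_Y χ → χ | Y ⊆ V, χ ∈ Φ}`
is consistent. -/
theorem witness_set_consistent {V A : Type} (T₀ : Set V) (F₀ : Set (Formula V A))
    (w : List (Triple V A)) (hw : IsWorld T₀ F₀ w)
    (U T X : Set V) (φ : Formula V A)
    (h : Formula.ann U (.bel T X φ) ∉ worldF F₀ w) :
    Consistent ({Formula.neg (.ann U φ)} ∪
      {ψ | Formula.bel ∅ (U ∪ X) ψ ∈ worldF F₀ w} ∪
      {χ | ∃ (Y : Set V) (ψ : Formula V A), χ = Formula.imp (.bel T Y ψ) ψ}) := by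
  rintro ⟨χ, h1, h2⟩
  set Fw := worldF F₀ w with hFw
  set G₀ : Set (Formula V A) := {ψ | Formula.bel ∅ (U ∪ X) ψ ∈ Fw} ∪
      {χ | ∃ (Y : Set V) (ψ : Formula V A), χ = Formula.imp (.bel T Y ψ) ψ} with hG₀
  have hGeq : ({Formula.neg (.ann U φ)} ∪
      {ψ | Formula.bel ∅ (U ∪ X) ψ ∈ Fw} ∪
      {χ | ∃ (Y : Set V) (ψ : Formula V A), χ = Formula.imp (.bel T Y ψ) ψ})
      = insert (Formula.neg (.ann U φ)) G₀ := by
    rw [Set.union_assoc, Set.singleton_union, hG₀]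
  rw [hGeq] at h1 h2
  have d1 : Deriv G₀ (.imp (Formula.neg (.ann U φ)) χ) := deduction h1
  have d2 : Deriv G₀ (.imp (Formula.neg (.ann U φ)) (.neg χ)) := deduction h2
  -- tautology: (¬a → b) → (¬a → ¬b) → a
  have d3 : Deriv G₀ (Formula.ann U φ) := by
    refine .mp (.mp (.thm (Prv.taut ?_)) d1) d2
    intro v hn hi; simp only [hi, hn]; tauto
  have d4 : Deriv Fw (Formula.bel T (U ∪ X) (.ann U φ)) := box_deriv d3
  have hcomm := Prv.comm (V := V) (A := A) T X U φ
  have d5 : Deriv Fw (Formula.ann U (.bel T X φ)) := by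
    refine .mp (.mp (.thm (Prv.taut ?_)) (.thm hcomm)) d4
    intro v hn hi
    simp only [Formula.iff, Formula.conj, hi, hn]; tauto
  exact h (mcs_mem (worldF_mcs hw) d5)
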